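/- For every integer a ≥ 2, the genus of S(a) equals (a/5)·(l_a + l_{a−2}); equivalently, 5·g(S(a)) = a·(l_a + l_{a−2}). -/

import Mathlib

/-- The Lucas sequence: l 0 = 2, l 1 = 1, l (n+2) = l (n+1) + l n. -/
def lucas : ℕ → ℕ
  | 0 => 2
  | 1 => 1
  | n + 2 => lucas (n + 1) + lucas n

/-- The modified (monotone) Lucas sequence: l̃ 0 = 1, l̃ 1 = 2, l̃ n = l n for n ≥ 2. -/
def ltil : ℕ → ℕ
  | 0 => 1
  | 1 => 2
  | n + 2 => lucas (n + 2)

/-- β x : minimal number of summands in a representation of x as a sum of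
modified Lucas numbers (with repetitions allowed). -/
noncomputable def beta (x : ℕ) : ℕ :=
  sInf {s : ℕ | ∃ k : ℕ, ∃ b : ℕ → ℕ,
    x = ∑ i ∈ Finset.range (k + 1), b i * ltil i ∧ s = ∑ i ∈ Finset.range (k + 1), b i}

lemma lucas_pos : ∀ n, 0 < lucas n
  | 0 => by norm_num [lucas]
  | 1 => by norm_num [lucas]
  | n + 2 => by
    have := lucas_pos (n+1)
    simp only [lucas]; omega

lemma ltil_pos (n : ℕ) : 0 < ltil n := by
  match n with
  | 0 => norm_num [ltil]
  | 1 => norm_num [ltil]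
  | n + 2 => exact lucas_pos _

lemma ltil_lt_succ : ∀ n, ltil n < ltil (n + 1)
  | 0 => by norm_num [ltil]
  | 1 => by norm_num [ltil, lucas]
  | n + 2 => by
    show lucas (n+2) < lucas (n+3)
    have := lucas_pos n
    have h3 : lucas (n+3) = lucas (n+2) + lucas (n+1) := rfl
    have := lucas_pos (n+1)
    omega

lemma ltil_strictMono : StrictMono ltil := strictMono_nat_of_lt_succ ltil_lt_succ

lemma ltil_ge (n : ℕ) : n + 1 ≤ ltil n := by
  induction n with
  | zero => norm_num [ltil]
  | succ k ih => have := ltil_lt_succ k; omega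

lemma ltil_eq_lucas {n : ℕ} (h : 2 ≤ n) : ltil n = lucas n := by
  obtain ⟨m, rfl⟩ := Nat.exists_eq_add_of_le h
  rw [add_comm]; rfl

lemma exists_ltil_eq_lucas (n : ℕ) : ∃ j, ltil j = lucas n := by
  match n with
  | 0 => exact ⟨1, rfl⟩
  | 1 => exact ⟨0, rfl⟩
  | n + 2 => exact ⟨n + 2, rfl⟩

lemma exists_lucas_eq_ltil (n : ℕ) : ∃ j, lucas j = ltil n := by
  match n with
  | 0 => exact ⟨1, rfl⟩
  | 1 => exact ⟨0, rfl⟩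
  | n + 2 => exact ⟨n + 2, rfl⟩

/-- value of a multiset of indices -/
def mval (M : Multiset ℕ) : ℕ := (M.map ltil).sum

/-- potential -/
def mpot (M : Multiset ℕ) : ℕ := (M.map (2 ^ ·)).sum

def Good (M : Multiset ℕ) : Prop :=
  (∀ i, M.count i ≤ 1) ∧ ∀ i, ¬(i ∈ M ∧ i + 1 ∈ M)

lemma mval_add (A B : Multiset ℕ) : mval (A + B) = mval A + mval B := by
  simp [mval]

lemma mpot_add (A B : Multiset ℕ) : mpot (A + B) = mpot A + mpot B := by
  simp [mpot]

lemma mval_cons (i : ℕ) (M : Multiset ℕ) : mval (i ::ₘ M) = ltil i + mval M := by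
  simp [mval]

lemma mpot_cons (i : ℕ) (M : Multiset ℕ) : mpot (i ::ₘ M) = 2 ^ i + mpot M := by
  simp [mpot]

lemma mval_finsum (s : Finset ℕ) (g : ℕ → Multiset ℕ) :
    mval (∑ i ∈ s, g i) = ∑ i ∈ s, mval (g i) := by
  classical
  induction s using Finset.induction_on with
  | empty => simp [mval]
  | insert _ _ h ih => simp [Finset.sum_insert h, mval_add, ih]

lemma mcard_finsum (s : Finset ℕ) (g : ℕ → Multiset ℕ) :
    Multiset.card (∑ i ∈ s, g i) = ∑ i ∈ s, Multiset.card (g i) := by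
  classical
  induction s using Finset.induction_on with
  | empty => simp
  | insert _ _ h ih => simp [Finset.sum_insert h, ih]

lemma mval_eq_sum (M : Multiset ℕ) (K : ℕ) (h : ∀ i ∈ M, i < K) :
    mval M = ∑ i ∈ Finset.range K, M.count i * ltil i := by
  classical
  rw [mval, Finset.sum_multiset_map_count]
  rw [Finset.sum_subset (fun i hi => Finset.mem_range.mpr (h i (Multiset.mem_toFinset.mp hi)))
    (fun i _ hi => by
      rw [Multiset.count_eq_zero_of_notMem (fun hm => hi (Multiset.mem_toFinset.mpr hm))]
      simp)]
  simp [smul_eq_mul]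

lemma mcard_eq_sum (M : Multiset ℕ) (K : ℕ) (h : ∀ i ∈ M, i < K) :
    Multiset.card M = ∑ i ∈ Finset.range K, M.count i := by
  classical
  rw [← Multiset.toFinset_sum_count_eq M]
  exact Finset.sum_subset (fun i hi => Finset.mem_range.mpr (h i (Multiset.mem_toFinset.mp hi)))
    (fun i _ hi => Multiset.count_eq_zero_of_notMem (fun hm => hi (Multiset.mem_toFinset.mpr hm)))

/-- beta is the min of card over multiset representations -/
lemma beta_eq_sInf (x : ℕ) :
    beta x = sInf {s : ℕ | ∃ M : Multiset ℕ, mval M = x ∧ Multiset.card M = s} := by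
  rw [beta]
  apply congrArg
  ext s
  constructor
  · rintro ⟨k, b, hx, hs⟩
    refine ⟨∑ i ∈ Finset.range (k+1), Multiset.replicate (b i) i, ?_, ?_⟩
    · rw [mval_finsum, hx]
      refine Finset.sum_congr rfl fun i _ => ?_
      simp [mval, Multiset.map_replicate, Multiset.sum_replicate, mul_comm]
    · rw [mcard_finsum, hs]
      simp
  · rintro ⟨M, hx, hs⟩
    classical
    have hbig : ∀ i ∈ M, i < mval M + 1 := by
      intro i hi
      have h1 : ltil i ≤ mval M :=
        Multiset.single_le_sum (fun y _ => Nat.zero_le y) _ (Multiset.mem_map_of_mem ltil hi)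
      have := ltil_ge i
      omega
    exact ⟨mval M, fun i => M.count i, by rw [← hx]; exact mval_eq_sum M _ hbig,
      by rw [← hs]; exact mcard_eq_sum M _ hbig⟩

lemma betaSet_nonempty (x : ℕ) :
    ∃ M : Multiset ℕ, mval M = x ∧ Multiset.card M = x := by
  refine ⟨Multiset.replicate x 0, ?_, by simp⟩
  simp [mval, Multiset.map_replicate, Multiset.sum_replicate, ltil]

lemma beta_le_card (M : Multiset ℕ) : beta (mval M) ≤ Multiset.card M := by
  rw [beta_eq_sInf]
  exact Nat.sInf_le ⟨M, rfl, rfl⟩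

lemma exists_min_rep (x : ℕ) : ∃ M : Multiset ℕ, mval M = x ∧ Multiset.card M = beta x := by
  have h : {s : ℕ | ∃ M : Multiset ℕ, mval M = x ∧ Multiset.card M = s}.Nonempty :=
    ⟨x, betaSet_nonempty x⟩
  have := Nat.sInf_mem h
  rw [← beta_eq_sInf] at this
  exact this

lemma beta_zero : beta 0 = 0 := by
  have := beta_le_card 0
  simpa [mval] using this

lemma beta_pos {x : ℕ} (hx : 0 < x) : 0 < beta x := by
  rcases Nat.eq_zero_or_pos (beta x) with h | h
  · obtain ⟨M, hv, hc⟩ := exists_min_rep x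
    rw [h, Multiset.card_eq_zero] at hc
    subst hc
    simp [mval] at hv
    omega
  · exact h

lemma beta_add_le (x y : ℕ) : beta (x + y) ≤ beta x + beta y := by
  obtain ⟨M, hM, hMc⟩ := exists_min_rep x
  obtain ⟨N, hN, hNc⟩ := exists_min_rep y
  have := beta_le_card (M + N)
  rw [mval_add, hM, hN, Multiset.card_add, hMc, hNc] at this
  exact this

lemma beta_ltil (n : ℕ) : beta (ltil n) = 1 := by
  have h1 : beta (ltil n) ≤ 1 := by
    have := beta_le_card {n}
    simpa [mval] using this
  have h2 := beta_pos (ltil_pos n)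
  omega

lemma beta_lucas (n : ℕ) : beta (lucas n) = 1 := by
  obtain ⟨j, hj⟩ := exists_ltil_eq_lucas n
  rw [← hj, beta_ltil]

lemma beta_mul_le (c z : ℕ) : beta (c * z) ≤ c * beta z := by
  induction c with
  | zero => simp [beta_zero]
  | succ k ih =>
    have h := beta_add_le (k * z) z
    calc beta ((k+1) * z) = beta (k * z + z) := by ring_nf
    _ ≤ beta (k*z) + beta z := h
    _ ≤ k * beta z + beta z := by omega
    _ = (k+1) * beta z := by ring

/-- extraction: from a minimal representation we can peel off one summand -/
lemma beta_extract {x : ℕ} (hx : 0 < x) :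
    ∃ n, ltil n ≤ x ∧ beta x = beta (x - ltil n) + 1 := by
  obtain ⟨M, hv, hc⟩ := exists_min_rep x
  have hM : M ≠ 0 := by
    intro h; subst h; simp [mval] at hv; omega
  obtain ⟨n, hn⟩ := Multiset.exists_mem_of_ne_zero hM
  obtain ⟨R, rfl⟩ := Multiset.exists_cons_of_mem hn
  rw [mval_cons] at hv
  have hle : ltil n ≤ x := by omega
  refine ⟨n, hle, ?_⟩
  have h1 : beta (x - ltil n) ≤ Multiset.card R := by
    have := beta_le_card R
    have hR : mval R = x - ltil n := by omega
    rwa [hR] at this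
  have h2 : beta x ≤ beta (x - ltil n) + 1 := by
    have := beta_add_le (x - ltil n) (ltil n)
    rw [beta_ltil] at this
    have hxx : x - ltil n + ltil n = x := by omega
    rwa [hxx] at this
  have h3 : Multiset.card (n ::ₘ R) = Multiset.card R + 1 := by simp
  omega

lemma ltil_z : ltil 0 = 1 := rfl
lemma ltil_o : ltil 1 = 2 := rfl
lemma ltil_t : ltil 2 = 3 := rfl
lemma ltil_th : ltil 3 = 4 := rfl
lemma ltil_f : ltil 4 = 7 := rfl

lemma good_of_le {N M : Multiset ℕ} (h : N ≤ M) (hG : Good M) : Good N := by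
  constructor
  · intro i
    exact le_trans (Multiset.count_le_of_le i h) (hG.1 i)
  · intro i ⟨h1, h2⟩
    exact hG.2 i ⟨Multiset.mem_of_le h h1, Multiset.mem_of_le h h2⟩

lemma card_le_mval (M : Multiset ℕ) : Multiset.card M ≤ mval M := by
  have h : Multiset.card (M.map ltil) • 1 ≤ (M.map ltil).sum :=
    Multiset.card_nsmul_le_sum (fun x hx => by
      obtain ⟨i, _, rfl⟩ := Multiset.mem_map.mp hx
      exact ltil_pos i)
  simpa [mval] using h

lemma mem_le_mval {M : Multiset ℕ} {i : ℕ} (h : i ∈ M) : i < mval M := by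
  have h1 : ltil i ≤ mval M :=
    Multiset.single_le_sum (fun y _ => Nat.zero_le y) _ (Multiset.mem_map_of_mem ltil h)
  have := ltil_ge i
  omega

lemma mpot_le (M : Multiset ℕ) : mpot M ≤ Multiset.card M * 2 ^ (mval M) := by
  have h := Multiset.sum_le_card_nsmul (M.map (2 ^ ·)) (2 ^ (mval M))
    (fun x hx => by
      obtain ⟨i, hi, rfl⟩ := Multiset.mem_map.mp hx
      exact Nat.pow_le_pow_right (by norm_num) (le_of_lt (mem_le_mval hi)))
  simpa [mpot, smul_eq_mul] using h

lemma notGood_step {M : Multiset ℕ} (h : ¬ Good M) :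
    ∃ M', mval M' = mval M ∧
      (Multiset.card M' < Multiset.card M ∨
       (Multiset.card M' = Multiset.card M ∧ mpot M < mpot M')) := by
  rw [Good, not_and_or] at h
  have hdecomp : (∃ i R, M = i ::ₘ i ::ₘ R) ∨ (∃ i R, M = i ::ₘ (i+1) ::ₘ R) := by
    rcases h with h | h
    · push_neg at h
      obtain ⟨i, hi⟩ := h
      left
      have hmem : i ∈ M := Multiset.one_le_count_iff_mem.mp (by omega)
      obtain ⟨R₁, hR₁⟩ := Multiset.exists_cons_of_mem hmem
      have : i ∈ R₁ := by
        have hc := hi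
        rw [hR₁, Multiset.count_cons_self] at hc
        exact Multiset.one_le_count_iff_mem.mp (by omega)
      obtain ⟨R, hR⟩ := Multiset.exists_cons_of_mem this
      exact ⟨i, R, by rw [hR₁, hR]⟩
    · push_neg at h
      obtain ⟨i, hi1, hi2⟩ := h
      right
      obtain ⟨R₁, hR₁⟩ := Multiset.exists_cons_of_mem hi1
      have : i + 1 ∈ R₁ := by
        rw [hR₁, Multiset.mem_cons] at hi2
        rcases hi2 with h' | h'
        · omega
        · exact h'
      obtain ⟨R, hR⟩ := Multiset.exists_cons_of_mem this
      exact ⟨i, R, by rw [hR₁, hR]⟩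
  rcases hdecomp with ⟨i, R, hR⟩ | ⟨i, R, hR⟩
  · -- duplicate: M = i ::ₘ i ::ₘ R
    have hval : mval M = ltil i + ltil i + mval R := by rw [hR, mval_cons, mval_cons]; ring
    have hcard : Multiset.card M = Multiset.card R + 2 := by rw [hR]; simp
    have hpot : mpot M = 2 ^ i + 2 ^ i + mpot R := by rw [hR, mpot_cons, mpot_cons]; ring
    rcases i with _|_|_|_|j
    · refine ⟨1 ::ₘ R, ?_, Or.inl ?_⟩
      · rw [mval_cons, hval, ltil_z, ltil_o]
      · rw [hcard]; simp
    · refine ⟨3 ::ₘ R, ?_, Or.inl ?_⟩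
      · rw [mval_cons, hval, ltil_o, ltil_th]
      · rw [hcard]; simp
    · refine ⟨3 ::ₘ 1 ::ₘ R, ?_, Or.inr ⟨?_, ?_⟩⟩
      · rw [mval_cons, mval_cons, hval, ltil_t, ltil_th, ltil_o]; omega
      · rw [hcard]; simp
      · rw [hpot, mpot_cons, mpot_cons]; norm_num
    · refine ⟨4 ::ₘ 0 ::ₘ R, ?_, Or.inr ⟨?_, ?_⟩⟩
      · rw [mval_cons, mval_cons, hval, ltil_th, ltil_f, ltil_z]; omega
      · rw [hcard]; simp
      · rw [hpot, mpot_cons, mpot_cons]; norm_num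
    · simp only [show j+1+1+1+1 = j+4 from rfl] at hval hpot
      refine ⟨(j+5) ::ₘ (j+2) ::ₘ R, ?_, Or.inr ⟨?_, ?_⟩⟩
      · rw [mval_cons, mval_cons, hval]
        have e1 : ltil (j+5) = lucas (j+4) + lucas (j+3) := rfl
        have e2 : ltil (j+4) = lucas (j+4) := rfl
        have e3 : ltil (j+2) = lucas (j+2) := rfl
        have e4 : lucas (j+4) = lucas (j+3) + lucas (j+2) := rfl
        omega
      · rw [hcard]; simp
      · rw [hpot, mpot_cons, mpot_cons]
        have h1 : (2:ℕ) ^ (j+5) = 2 ^ (j+4) + 2 ^ (j+4) := by ring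
        have h2 : (0:ℕ) < 2 ^ (j+2) := Nat.pow_pos (by norm_num)
        omega
  · -- adjacent: M = i ::ₘ (i+1) ::ₘ R
    have hval : mval M = ltil i + ltil (i+1) + mval R := by rw [hR, mval_cons, mval_cons]; ring
    have hcard : Multiset.card M = Multiset.card R + 2 := by rw [hR]; simp
    have hpot : mpot M = 2 ^ i + 2 ^ (i+1) + mpot R := by rw [hR, mpot_cons, mpot_cons]; ring
    rcases i with _|_|j
    · refine ⟨2 ::ₘ R, ?_, Or.inl ?_⟩
      · rw [mval_cons, hval, ltil_z, ltil_o, ltil_t]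
      · rw [hcard]; simp
    · simp only [show (1:ℕ)+1 = 2 from rfl] at hval hpot
      refine ⟨0 ::ₘ 3 ::ₘ R, ?_, Or.inr ⟨?_, ?_⟩⟩
      · rw [mval_cons, mval_cons, hval, ltil_z, ltil_th, ltil_o, ltil_t]; omega
      · rw [hcard]; simp
      · rw [hpot, mpot_cons, mpot_cons]; norm_num; omega
    · simp only [show j+1+1 = j+2 from rfl, show j+2+1 = j+3 from rfl] at hval hpot
      refine ⟨(j+4) ::ₘ R, ?_, Or.inl ?_⟩
      · rw [mval_cons, hval]
        have e1 : ltil (j+4) = lucas (j+3) + lucas (j+2) := rfl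
        have e2 : ltil (j+2) = lucas (j+2) := rfl
        have e3 : ltil (j+3) = lucas (j+3) := rfl
        omega
      · rw [hcard]; simp

lemma exists_good_aux :
    ∀ n, ∀ M : Multiset ℕ,
      Multiset.card M * (mval M * 2 ^ (mval M) + 1) + (mval M * 2 ^ (mval M) - mpot M) ≤ n →
      ∃ M', Good M' ∧ mval M' = mval M ∧ Multiset.card M' ≤ Multiset.card M := by
  intro n
  induction n using Nat.strong_induction_on with
  | _ n ih =>
    intro M hM
    by_cases hG : Good M
    · exact ⟨M, hG, rfl, le_rfl⟩
    · obtain ⟨M', hval, hcase⟩ := notGood_step hG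
      have hB : mval M' * 2 ^ (mval M') = mval M * 2 ^ (mval M) := by rw [hval]
      set B := mval M * 2 ^ (mval M) with hBdef
      have hμ' : Multiset.card M' * (B + 1) + (B - mpot M') < n := by
        have hμM : Multiset.card M * (B + 1) + (B - mpot M) ≤ n := hM
        rcases hcase with hlt | ⟨heq, hpot⟩
        · have h1 : (Multiset.card M' + 1) * (B + 1) ≤ Multiset.card M * (B + 1) :=
            Nat.mul_le_mul_right _ (by omega)
          have h2 : (Multiset.card M' + 1) * (B + 1) = Multiset.card M' * (B + 1) + (B + 1) := by
            ring
          set X := Multiset.card M * (B + 1)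
          set Y := Multiset.card M' * (B + 1)
          omega
        · have hpb : mpot M' ≤ B := by
            calc mpot M' ≤ Multiset.card M' * 2 ^ (mval M') := mpot_le M'
            _ ≤ mval M' * 2 ^ (mval M') := Nat.mul_le_mul_right _ (card_le_mval M')
            _ = B := hB
          rw [heq]
          set X := Multiset.card M * (B + 1)
          omega
      have harg : Multiset.card M' * (mval M' * 2 ^ (mval M') + 1) +
          (mval M' * 2 ^ (mval M') - mpot M') =
          Multiset.card M' * (B + 1) + (B - mpot M') := by rw [hval]
      obtain ⟨M'', hG'', hv'', hc''⟩ := ih _ hμ' M' (le_of_eq harg)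
      refine ⟨M'', hG'', by rw [hv'', hval], ?_⟩
      rcases hcase with hlt | ⟨heq, _⟩
      · omega
      · omega

lemma exists_good (M : Multiset ℕ) :
    ∃ M', Good M' ∧ mval M' = mval M ∧ Multiset.card M' ≤ Multiset.card M :=
  exists_good_aux _ M le_rfl

lemma lucas_three_le : ∀ b, 3 ≤ lucas (b+2)
  | 0 => by norm_num [lucas]
  | (b+1) => by
    have h1 := lucas_three_le b
    have h : lucas (b+1+2) = lucas (b+2) + lucas (b+1) := rfl
    have h2 := lucas_pos (b+1)
    omega

lemma lucas_ge_three {a : ℕ} (ha : 2 ≤ a) : 3 ≤ lucas a := by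
  obtain ⟨b, rfl⟩ := Nat.exists_eq_add_of_le ha
  rw [show 2 + b = b + 2 by omega]
  exact lucas_three_le b

lemma good_val_le : ∀ k (M : Multiset ℕ), Good M → (∀ i ∈ M, i ≤ k) → mval M ≤ ltil (k+1) := by
  intro k
  induction k using Nat.strong_induction_on with
  | _ k ih =>
    intro M hG hb
    match k with
    | 0 =>
      have hs := mval_eq_sum M 1 (fun i hi => by have := hb i hi; omega)
      rw [hs, Finset.sum_range_one, ltil_z, ltil_o]
      have := hG.1 0
      omega
    | 1 =>
      have hs := mval_eq_sum M 2 (fun i hi => by have := hb i hi; omega)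
      rw [hs, Finset.sum_range_succ, Finset.sum_range_one, ltil_z, ltil_o, ltil_t]
      have h0 := hG.1 0
      have h1 := hG.1 1
      have h01 : ¬(1 ≤ M.count 0 ∧ 1 ≤ M.count 1) := by
        intro ⟨ha, hb'⟩
        exact hG.2 0 ⟨Multiset.one_le_count_iff_mem.mp ha, Multiset.one_le_count_iff_mem.mp hb'⟩
      omega
    | 2 =>
      have hs := mval_eq_sum M 3 (fun i hi => by have := hb i hi; omega)
      rw [hs, Finset.sum_range_succ, Finset.sum_range_succ, Finset.sum_range_one,
        ltil_z, ltil_o, ltil_t, ltil_th]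
      have h0 := hG.1 0
      have h1 := hG.1 1
      have h2 := hG.1 2
      have h01 : ¬(1 ≤ M.count 0 ∧ 1 ≤ M.count 1) := by
        intro ⟨ha, hb'⟩
        exact hG.2 0 ⟨Multiset.one_le_count_iff_mem.mp ha, Multiset.one_le_count_iff_mem.mp hb'⟩
      have h12 : ¬(1 ≤ M.count 1 ∧ 1 ≤ M.count 2) := by
        intro ⟨ha, hb'⟩
        exact hG.2 1 ⟨Multiset.one_le_count_iff_mem.mp ha, Multiset.one_le_count_iff_mem.mp hb'⟩
      omega
    | (j+3) =>
      by_cases hmem : (j+3) ∈ M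
      · obtain ⟨R, hR⟩ := Multiset.exists_cons_of_mem hmem
        have hRle : R ≤ M := hR ▸ Multiset.le_cons_self R _
        have hGR : Good R := good_of_le hRle hG
        have hbR : ∀ i ∈ R, i ≤ j + 1 := by
          intro i hi
          have h1 : i ≤ j + 3 := hb i (Multiset.mem_of_le hRle hi)
          have h2 : i ≠ j + 3 := by
            intro h
            subst h
            have hc := hG.1 (j+3)
            rw [hR, Multiset.count_cons_self] at hc
            have := Multiset.one_le_count_iff_mem.mpr hi
            omega
          have h3 : i ≠ j + 2 := by
            intro h
            subst h
            exact hG.2 (j+2) ⟨Multiset.mem_of_le hRle hi, hmem⟩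
          omega
        have hIH := ih (j+1) (by omega) R hGR hbR
        rw [show j+1+1 = j+2 from rfl] at hIH
        have hval : mval M = ltil (j+3) + mval R := by rw [hR, mval_cons]
        have hrec : ltil (j+3+1) = ltil (j+3) + ltil (j+2) := by
          show lucas (j+4) = lucas (j+3) + lucas (j+2)
          rfl
        omega
      · have hb' : ∀ i ∈ M, i ≤ j + 2 := by
          intro i hi
          have h1 := hb i hi
          have : i ≠ j + 3 := fun h => hmem (h ▸ hi)
          omega
        have hIH := ih (j+2) (by omega) M hG hb'
        rw [show j+2+1 = j+3 from rfl] at hIH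
        have := ltil_lt_succ (j+3)
        omega

/-- Greedy optimality -/
lemma beta_greedy {x g : ℕ} (h1 : ltil g ≤ x) (h2 : x < ltil (g+1)) :
    beta x = beta (x - ltil g) + 1 := by
  have hle : beta x ≤ beta (x - ltil g) + 1 := by
    have := beta_add_le (x - ltil g) (ltil g)
    rw [beta_ltil] at this
    have hxx : x - ltil g + ltil g = x := by omega
    rwa [hxx] at this
  have hge : beta (x - ltil g) + 1 ≤ beta x := by
    obtain ⟨M₀, hv₀, hc₀⟩ := exists_min_rep x
    obtain ⟨M, hGM, hvM, hcM⟩ := exists_good M₀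
    rw [hv₀] at hvM
    have hcM' : Multiset.card M = beta x := by
      have := beta_le_card M
      rw [hvM] at this
      omega
    have hidx : ∀ i ∈ M, i ≤ g := by
      intro i hi
      have h3 : ltil i ≤ x := by
        have := Multiset.single_le_sum (fun y (_ : y ∈ M.map ltil) => Nat.zero_le y) _
          (Multiset.mem_map_of_mem ltil hi)
        rw [← mval] at this
        omega
      by_contra hgt
      push_neg at hgt
      have := ltil_strictMono.monotone (show g + 1 ≤ i by omega)
      omega
    have hgmem : g ∈ M := by
      by_contra hgm
      have hpos : 0 < x := lt_of_lt_of_le (ltil_pos g) h1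
      match g, h1, h2, hgm with
      | 0, h1, h2, hgm =>
        have hM0 : M ≠ 0 := by
          intro h
          rw [h] at hvM
          simp [mval] at hvM
          omega
        obtain ⟨i, hi⟩ := Multiset.exists_mem_of_ne_zero hM0
        have : i ≤ 0 := hidx i hi
        interval_cases i
        exact hgm hi
      | (g'+1), h1, h2, hgm =>
        have hidx' : ∀ i ∈ M, i ≤ g' := by
          intro i hi
          have h4 := hidx i hi
          have : i ≠ g' + 1 := fun h => hgm (h ▸ hi)
          omega
        have hval := good_val_le g' M hGM hidx'
        rw [hvM, show g'+1 = g'+1 from rfl] at hval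
        have hxeq : x = ltil (g'+1) := by omega
        have hb1 : beta x = 1 := by rw [hxeq]; exact beta_ltil _
        have hcM1 : Multiset.card M = 1 := by omega
        obtain ⟨i, hMi⟩ := Multiset.card_eq_one.mp hcM1
        rw [hMi] at hvM
        simp [mval] at hvM
        have hiM : i ∈ M := by rw [hMi]; simp
        have hig : i ≤ g' := hidx' i hiM
        have : ltil i < ltil (g'+1) := ltil_strictMono (by omega)
        omega
    obtain ⟨R, hR⟩ := Multiset.exists_cons_of_mem hgmem
    rw [hR] at hcM' hvM
    rw [mval_cons] at hvM
    have hvR : mval R = x - ltil g := by omega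
    have hbR := beta_le_card R
    rw [hvR] at hbR
    have hcc : Multiset.card (g ::ₘ R) = Multiset.card R + 1 := by simp
    omega
  omega

lemma lucas_lt_succ {n : ℕ} (h : 2 ≤ n) : lucas n < lucas (n+1) := by
  have := ltil_lt_succ n
  rwa [ltil_eq_lucas h, ltil_eq_lucas (by omega)] at this

lemma lucas_rec_sub {a : ℕ} (ha : 2 ≤ a) : lucas (a+1) = lucas a + lucas (a-1) := by
  obtain ⟨b, rfl⟩ := Nat.exists_eq_add_of_le ha
  have e : 2 + b + 1 = b + 3 := by omega
  have e1 : 2 + b = b + 2 := by omega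
  have e2 : 2 + b - 1 = b + 1 := by omega
  rw [e, e2, e1]
  rfl

/-- L2 -/
lemma beta_sub_lucas {a u : ℕ} (ha : 2 ≤ a) (h1 : lucas a ≤ u) (h2 : u < 2 * lucas a) :
    beta (u - lucas a) ≤ beta u + 1 := by
  have hta : ltil a = lucas a := ltil_eq_lucas ha
  have hta1 : ltil (a+1) = lucas (a+1) := ltil_eq_lucas (by omega)
  have hta2 : ltil (a+2) = lucas (a+2) := ltil_eq_lucas (by omega)
  by_cases hcase : u < lucas (a+1)
  · have hg := beta_greedy (x := u) (g := a) (by rw [hta]; omega) (by rw [hta1]; omega)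
    rw [hta] at hg
    omega
  · push_neg at hcase
    have hrec2 : lucas (a+2) = lucas (a+1) + lucas a := rfl
    have hmono : lucas a < lucas (a+1) := lucas_lt_succ ha
    have hg := beta_greedy (x := u) (g := a+1) (by rw [hta1]; omega) (by rw [show a+1+1 = a+2 from rfl, hta2]; omega)
    rw [hta1] at hg
    have hrec : lucas (a+1) = lucas a + lucas (a-1) := lucas_rec_sub ha
    have hsplit : u - lucas a = (u - lucas (a+1)) + lucas (a-1) := by omega
    have hb := beta_add_le (u - lucas (a+1)) (lucas (a-1))
    rw [beta_lucas, ← hsplit] at hb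
    omega

lemma lucas_add_fib : ∀ k b, lucas (b + 1 + k) = Nat.fib (k+1) * lucas (b+1) + Nat.fib k * lucas b
  | 0, b => by simp
  | 1, b => by
    rw [show b + 1 + 1 = b + 2 from rfl]
    show lucas (b+1) + lucas b = _
    rw [Nat.fib_two, Nat.fib_one]
    ring
  | (k+2), b => by
    have h1 := lucas_add_fib k b
    have h2 := lucas_add_fib (k+1) b
    have e : lucas (b+1+(k+2)) = lucas (b+1+(k+1)) + lucas (b+1+k) := by
      rw [show b+1+(k+2) = (b+1+k) + 2 by ring]
      rw [show b+1+(k+1) = (b+1+k) + 1 by ring]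
      rfl
    have f1 : Nat.fib (k+2+1) = Nat.fib (k+1) + Nat.fib (k+1+1) := by
      rw [show k+2+1 = (k+1)+2 from rfl]
      exact Nat.fib_add_two
    have f2 : Nat.fib (k+2) = Nat.fib k + Nat.fib (k+1) := Nat.fib_add_two
    rw [e, h1, h2, f1, f2]
    ring

/-- Key lemma M -/
lemma beta_mod {a : ℕ} (ha : 2 ≤ a) : ∀ y, beta (y % lucas a) ≤ beta y + y / lucas a := by
  intro y
  induction y using Nat.strong_induction_on with
  | _ y ih =>
    set m := lucas a with hm
    have hm3 : 3 ≤ m := lucas_ge_three ha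
    by_cases hy : y < m
    · rw [Nat.mod_eq_of_lt hy]
      exact Nat.le_add_right _ _
    · push_neg at hy
      have hy0 : 0 < y := by omega
      obtain ⟨n, hn1, hn2⟩ := beta_extract hy0
      set y'' := y - ltil n with hy''
      have hyy : y = ltil n + y'' := by omega
      have hIH : beta (y'' % m) ≤ beta y'' + y'' / m := ih y'' (by have := ltil_pos n; omega)
      have H : beta (ltil n % m) ≤ 1 + ltil n / m := by
        by_cases hsm : ltil n < m
        · rw [Nat.mod_eq_of_lt hsm, beta_ltil]
          exact Nat.le_add_right _ _
        · push_neg at hsm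
          have hna : a ≤ n := by
            by_contra hc
            push_neg at hc
            have := ltil_strictMono hc
            rw [ltil_eq_lucas ha] at this
            omega
          obtain ⟨k, rfl⟩ := Nat.exists_eq_add_of_le hna
          match k with
          | 0 =>
            rw [show a + 0 = a from rfl, ltil_eq_lucas ha, ← hm, Nat.mod_self, beta_zero]
            exact Nat.zero_le _
          | (k+1) =>
            have hlt : ltil (a + (k+1)) = lucas (a + (k+1)) := ltil_eq_lucas (by omega)
            have hid : lucas (a + (k+1)) =
                Nat.fib (k+2) * lucas a + Nat.fib (k+1) * lucas (a-1) := by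
              have h5 := lucas_add_fib (k+1) (a-1)
              rw [show a - 1 + 1 = a by omega] at h5
              rw [show k+1+1 = k+2 from rfl] at h5
              exact h5
            set w := Nat.fib (k+1) * lucas (a-1) with hw
            have hbw : beta w ≤ Nat.fib (k+1) := by
              have h6 := beta_mul_le (Nat.fib (k+1)) (lucas (a-1))
              rw [beta_lucas] at h6
              simpa using h6
            have hfibpos : 1 ≤ Nat.fib (k+2) := Nat.fib_pos.mpr (by omega)
            have hfible : Nat.fib (k+1) ≤ Nat.fib (k+2) := Nat.fib_le_fib_succ
            have hwm : w + Nat.fib (k+2) * m = ltil (a+(k+1)) := by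
              rw [hlt, hid, ← hm]
              ring
            have hwlt : w < y := by
              have hml : m ≤ Nat.fib (k+2) * m := Nat.le_mul_of_pos_left m (by omega)
              omega
            have hIHw : beta (w % m) ≤ beta w + w / m := ih w hwlt
            have hmod : ltil (a+(k+1)) % m = w % m := by
              rw [← hwm, Nat.add_mul_mod_self_right]
            have hdiv : ltil (a+(k+1)) / m = w / m + Nat.fib (k+2) := by
              rw [← hwm, Nat.add_mul_div_right _ _ (show 0 < m by omega)]
            obtain ⟨d, hd⟩ : ∃ t, w / m = t := ⟨_, rfl⟩
            rw [hmod, hdiv, hd]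
            rw [hd] at hIHw
            omega
      obtain ⟨r, hr⟩ : ∃ t, ltil n % m = t := ⟨_, rfl⟩
      obtain ⟨q, hq⟩ : ∃ t, ltil n / m = t := ⟨_, rfl⟩
      obtain ⟨r'', hr''⟩ : ∃ t, y'' % m = t := ⟨_, rfl⟩
      obtain ⟨q'', hq''⟩ : ∃ t, y'' / m = t := ⟨_, rfl⟩
      rw [hr, hq] at H
      rw [hr'', hq''] at hIH
      have e1 : m * q + r = ltil n := by rw [← hq, ← hr]; exact Nat.div_add_mod _ _
      have e2 : m * q'' + r'' = y'' := by rw [← hq'', ← hr'']; exact Nat.div_add_mod _ _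
      have hdecomp : y = m * (q + q'') + (r + r'') := by
        rw [hyy, ← e1, ← e2]
        ring
      have hrm : r < m := by rw [← hr]; exact Nat.mod_lt _ (by omega)
      have hrm'' : r'' < m := by rw [← hr'']; exact Nat.mod_lt _ (by omega)
      by_cases hsum : r + r'' < m
      · have hymod : y % m = r + r'' := by
          rw [hdecomp, Nat.mul_add_mod, Nat.mod_eq_of_lt hsum]
        have hydiv : y / m = q + q'' := by
          rw [hdecomp, Nat.mul_add_div (show 0 < m by omega), Nat.div_eq_of_lt hsum]
          omega
        have hadd := beta_add_le r r''
        rw [hymod, hydiv]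
        omega
      · push_neg at hsum
        have hmul : m * (q + q'' + 1) = m * (q + q'') + m := by ring
        have hdecomp2 : y = m * (q + q'' + 1) + (r + r'' - m) := by
          set A := m * (q + q'')
          set B := m * (q + q'' + 1)
          omega
        have hymod : y % m = r + r'' - m := by
          rw [hdecomp2, Nat.mul_add_mod, Nat.mod_eq_of_lt (by omega)]
        have hydiv : y / m = q + q'' + 1 := by
          rw [hdecomp2, Nat.mul_add_div (show 0 < m by omega),
            Nat.div_eq_of_lt (show r + r'' - m < m by omega)]
        have hL2 : beta (r + r'' - m) ≤ beta (r + r'') + 1 := by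
          apply beta_sub_lucas ha
          · rw [← hm]; omega
          · rw [← hm]; omega
        have hadd := beta_add_le r r''
        rw [hymod, hydiv]
        omega

/-- γ x : the greatest k with l̃ k ≤ x (for x ≥ 1). -/
noncomputable def gamma (x : ℕ) : ℕ := sSup {k : ℕ | ltil k ≤ x}

/-- S a : the additive submonoid of ℕ generated by {l_a} ∪ {l_a + l_n : n ∈ ℕ}. -/
def Sset (a : ℕ) : AddSubmonoid ℕ :=
  AddSubmonoid.closure ({lucas a} ∪ {x : ℕ | ∃ n : ℕ, x = lucas a + lucas n})

/-- T a : the additive submonoid of ℕ generated by {l_a + l_n : n ∈ ℕ}. -/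
def Tset (a : ℕ) : AddSubmonoid ℕ :=
  AddSubmonoid.closure {x : ℕ | ∃ n : ℕ, x = lucas a + lucas n}

/-- membership direction (B) -/
lemma mem_Sset_of {a : ℕ} (ha : 2 ≤ a) :
    ∀ q r : ℕ, r < lucas a → beta r ≤ q → lucas a * q + r ∈ Sset a := by
  intro q
  induction q with
  | zero =>
    intro r _ hb
    have : beta r = 0 := by omega
    have hr0 : r = 0 := by
      by_contra h
      have := beta_pos (show 0 < r by omega)
      omega
    subst hr0
    simp only [mul_zero, add_zero]
    exact AddSubmonoid.zero_mem _
  | succ q' ih =>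
    intro r hr hb
    by_cases hr0 : r = 0
    · subst hr0
      have hmem : lucas a ∈ Sset a :=
        AddSubmonoid.subset_closure (Set.mem_union_left _ rfl)
      have h3 : ∀ t : ℕ, lucas a * t ∈ Sset a := by
        intro t
        induction t with
        | zero => simpa using (Sset a).zero_mem
        | succ u ihu =>
          have h4 := (Sset a).add_mem ihu hmem
          rw [show lucas a * (u+1) = lucas a * u + lucas a by ring]
          exact h4
      simpa using h3 (q' + 1)
    · have hrpos : 0 < r := by omega
      have hbpos := beta_pos hrpos
      obtain ⟨n, hn1, hn2⟩ := beta_extract hrpos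
      obtain ⟨j, hj⟩ := exists_lucas_eq_ltil n
      have hgen : lucas a + ltil n ∈ Sset a := by
        apply AddSubmonoid.subset_closure
        apply Set.mem_union_right
        exact ⟨j, by rw [hj]⟩
      have hrec : lucas a * q' + (r - ltil n) ∈ Sset a :=
        ih (r - ltil n) (by omega) (by omega)
      have heq : lucas a * (q' + 1) + r =
          (lucas a + ltil n) + (lucas a * q' + (r - ltil n)) := by
        have hmul : lucas a * (q' + 1) = lucas a * q' + lucas a := by ring
        omega
      rw [heq]
      exact AddSubmonoid.add_mem _ hgen hrec

/-- the submonoid S' -/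
def Sprime (a : ℕ) (ha : 2 ≤ a) : AddSubmonoid ℕ where
  carrier := {x : ℕ | beta (x % lucas a) ≤ x / lucas a}
  zero_mem' := by
    simp [Nat.zero_mod, beta_zero]
  add_mem' := by
    intro x y hx hy
    simp only [Set.mem_setOf_eq] at *
    have hm3 : 3 ≤ lucas a := lucas_ge_three ha
    set m := lucas a with hm
    obtain ⟨r, hr⟩ : ∃ t, x % m = t := ⟨_, rfl⟩
    obtain ⟨q, hq⟩ : ∃ t, x / m = t := ⟨_, rfl⟩
    obtain ⟨r'', hr''⟩ : ∃ t, y % m = t := ⟨_, rfl⟩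
    obtain ⟨q'', hq''⟩ : ∃ t, y / m = t := ⟨_, rfl⟩
    rw [hr, hq] at hx
    rw [hr'', hq''] at hy
    have e1 : m * q + r = x := by rw [← hq, ← hr]; exact Nat.div_add_mod _ _
    have e2 : m * q'' + r'' = y := by rw [← hq'', ← hr'']; exact Nat.div_add_mod _ _
    have hdecomp : x + y = m * (q + q'') + (r + r'') := by
      rw [← e1, ← e2]; ring
    have hrm : r < m := by rw [← hr]; exact Nat.mod_lt _ (by omega)
    have hrm'' : r'' < m := by rw [← hr'']; exact Nat.mod_lt _ (by omega)
    by_cases hsum : r + r'' < m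
    · have hymod : (x + y) % m = r + r'' := by
        rw [hdecomp, Nat.mul_add_mod, Nat.mod_eq_of_lt hsum]
      have hydiv : (x + y) / m = q + q'' := by
        rw [hdecomp, Nat.mul_add_div (show 0 < m by omega), Nat.div_eq_of_lt hsum]
        omega
      have hadd := beta_add_le r r''
      rw [hymod, hydiv]
      omega
    · push_neg at hsum
      have hmul : m * (q + q'' + 1) = m * (q + q'') + m := by ring
      have hdecomp2 : x + y = m * (q + q'' + 1) + (r + r'' - m) := by
        set A := m * (q + q'')
        set B := m * (q + q'' + 1)
        omega
      have hymod : (x + y) % m = r + r'' - m := by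
        rw [hdecomp2, Nat.mul_add_mod, Nat.mod_eq_of_lt (by omega)]
      have hydiv : (x + y) / m = q + q'' + 1 := by
        rw [hdecomp2, Nat.mul_add_div (show 0 < m by omega),
          Nat.div_eq_of_lt (show r + r'' - m < m by omega)]
      have hL2 : beta (r + r'' - m) ≤ beta (r + r'') + 1 := by
        apply beta_sub_lucas ha
        · rw [← hm]; omega
        · rw [← hm]; omega
      have hadd := beta_add_le r r''
      rw [hymod, hydiv]
      omega

/-- converse direction (A) -/
lemma beta_mod_le_of_mem {a x : ℕ} (ha : 2 ≤ a) (hx : x ∈ Sset a) :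
    beta (x % lucas a) ≤ x / lucas a := by
  have hm3 : 3 ≤ lucas a := lucas_ge_three ha
  have hsub : Sset a ≤ Sprime a ha := by
    apply AddSubmonoid.closure_le.mpr
    intro z hz
    rcases hz with hz | hz
    · rcases hz with rfl
      show beta (lucas a % lucas a) ≤ lucas a / lucas a
      rw [Nat.mod_self, beta_zero]
      exact Nat.zero_le _
    · obtain ⟨n, rfl⟩ := hz
      obtain ⟨j, hj⟩ := exists_ltil_eq_lucas n
      show beta ((lucas a + lucas n) % lucas a) ≤ (lucas a + lucas n) / lucas a
      rw [← hj]
      have hkey := beta_mod ha (ltil j)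
      rw [beta_ltil] at hkey
      have hmod : (lucas a + ltil j) % lucas a = ltil j % lucas a :=
        Nat.add_mod_left _ _
      have hdiv : (lucas a + ltil j) / lucas a = ltil j / lucas a + 1 :=
        Nat.add_div_left _ (by omega)
      rw [hmod, hdiv]
      omega
  exact hsub hx

lemma not_mem_Sset_iff {a x : ℕ} (ha : 2 ≤ a) :
    x ∉ Sset a ↔ x / lucas a < beta (x % lucas a) := by
  constructor
  · intro h
    by_contra hc
    push_neg at hc
    apply h
    have hm := mem_Sset_of ha (x / lucas a) (x % lucas a)
      (Nat.mod_lt _ (by have := lucas_ge_three ha; omega)) hc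
    rwa [Nat.div_add_mod] at hm
  · intro h hx
    have := beta_mod_le_of_mem ha hx
    omega

/-- the gap finset -/
noncomputable def gapF (a : ℕ) : Finset ℕ :=
  (Finset.range (lucas a)).biUnion
    (fun r => (Finset.range (beta r)).image (fun q => lucas a * q + r))

lemma gap_set_eq {a : ℕ} (ha : 2 ≤ a) : {x : ℕ | x ∉ Sset a} = ↑(gapF a) := by
  have hm3 : 3 ≤ lucas a := lucas_ge_three ha
  ext x
  simp only [Set.mem_setOf_eq, gapF, Finset.coe_biUnion, Finset.mem_coe,
    Finset.mem_biUnion, Finset.mem_image, Finset.mem_range, Set.mem_iUnion]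
  rw [not_mem_Sset_iff ha]
  constructor
  · intro h
    exact ⟨x % lucas a, Nat.mod_lt _ (by omega), x / lucas a, h, Nat.div_add_mod _ _⟩
  · rintro ⟨r, hr, q, hq, rfl⟩
    have hmod : (lucas a * q + r) % lucas a = r := by
      rw [Nat.mul_add_mod, Nat.mod_eq_of_lt hr]
    have hdiv : (lucas a * q + r) / lucas a = q := by
      rw [Nat.mul_add_div (by omega), Nat.div_eq_of_lt hr]
      omega
    rw [hmod, hdiv]
    exact hq

lemma gapF_card {a : ℕ} (ha : 2 ≤ a) :
    (gapF a).card = ∑ r ∈ Finset.range (lucas a), beta r := by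
  have hm3 : 3 ≤ lucas a := lucas_ge_three ha
  rw [gapF, Finset.card_biUnion]
  · refine Finset.sum_congr rfl fun r _ => ?_
    rw [Finset.card_image_of_injective _ (fun q1 q2 h => by
      have h2 : lucas a * q1 = lucas a * q2 := Nat.add_right_cancel h
      exact Nat.eq_of_mul_eq_mul_left (by omega) h2)]
    exact Finset.card_range _
  · intro r1 h1 r2 h2 hne
    apply Finset.disjoint_left.mpr
    intro x hx1 hx2
    simp only [Finset.mem_image, Finset.mem_range] at hx1 hx2
    obtain ⟨q1, _, he1⟩ := hx1
    obtain ⟨q2, _, he2⟩ := hx2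
    simp only [Finset.mem_coe, Finset.mem_range] at h1 h2
    apply hne
    have m1 : x % lucas a = r1 := by
      rw [← he1, Nat.mul_add_mod, Nat.mod_eq_of_lt h1]
    have m2 : x % lucas a = r2 := by
      rw [← he2, Nat.mul_add_mod, Nat.mod_eq_of_lt h2]
    omega

lemma lucas_fib : ∀ n, lucas (n+1) = Nat.fib (n+2) + Nat.fib n
  | 0 => by norm_num [lucas, Nat.fib]
  | 1 => by
    show lucas 2 = _
    rw [show lucas 2 = 3 from rfl, Nat.fib_one]
    rw [show Nat.fib 3 = 2 by decide]
  | (n+2) => by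
    have h1 := lucas_fib n
    have h2 := lucas_fib (n+1)
    have e : lucas (n+2+1) = lucas (n+2) + lucas (n+1) := rfl
    have f1 : Nat.fib (n+2+2) = Nat.fib (n+2) + Nat.fib (n+2+1) := Nat.fib_add_two
    have f2 : Nat.fib (n+2) = Nat.fib n + Nat.fib (n+1) := Nat.fib_add_two
    have h2' : lucas (n+2) = Nat.fib (n+2+1) + Nat.fib (n+1) := by
      have h3 := lucas_fib (n+1)
      rwa [show n+1+1 = n+2 from rfl, show n+1+2 = n+2+1 from rfl] at h3
    omega

lemma lucas_five_fib : ∀ b, lucas (b+2) + lucas b = 5 * Nat.fib (b+1)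
  | 0 => by decide
  | 1 => by decide
  | (b+2) => by
    have h1 := lucas_five_fib b
    have h2 := lucas_five_fib (b+1)
    have e1 : lucas (b+4) = lucas (b+3) + lucas (b+2) := rfl
    have e2 : lucas (b+2) = lucas (b+1) + lucas b := rfl
    have f1 : Nat.fib (b+3) = Nat.fib (b+1) + Nat.fib (b+2) := Nat.fib_add_two
    rw [show b+2+2 = b+4 from rfl, show b+2+1 = b+3 from rfl]
    rw [show b+1+2 = b+3 from rfl, show b+1+1 = b+2 from rfl] at h2
    omega

lemma sum_beta : ∀ b, ∑ r ∈ Finset.range (lucas (b+2)), beta r = (b+2) * Nat.fib (b+1) := by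
  intro b
  induction b using Nat.strong_induction_on with
  | _ b ih =>
    match b with
    | 0 =>
      rw [show lucas 2 = 3 from rfl]
      rw [Finset.sum_range_succ, Finset.sum_range_succ, Finset.sum_range_one]
      rw [beta_zero, show beta 1 = 1 from beta_ltil 0, show beta 2 = 1 from beta_ltil 1]
      decide
    | 1 =>
      rw [show lucas 3 = 4 from rfl]
      rw [Finset.sum_range_succ, Finset.sum_range_succ, Finset.sum_range_succ,
        Finset.sum_range_one]
      rw [beta_zero, show beta 1 = 1 from beta_ltil 0, show beta 2 = 1 from beta_ltil 1,
        show beta 3 = 1 from beta_ltil 2]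
      decide
    | (c+2) =>
      have hrec : lucas (c+4) = lucas (c+3) + lucas (c+2) := rfl
      have hle1 : lucas (c+3) ≤ lucas (c+4) := by
        have := lucas_pos (c+2)
        omega
      -- split the sum
      have hsplit : ∑ r ∈ Finset.range (lucas (c+4)), beta r =
          (∑ r ∈ Finset.range (lucas (c+3)), beta r) +
          (∑ r ∈ Finset.Ico (lucas (c+3)) (lucas (c+4)), beta r) := by
        rw [Finset.range_eq_Ico, ← Finset.sum_Ico_consecutive _ (Nat.zero_le _) hle1, ← Finset.range_eq_Ico]
      have hshift : ∑ r ∈ Finset.Ico (lucas (c+3)) (lucas (c+4)), beta r =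
          ∑ s ∈ Finset.range (lucas (c+2)), beta (lucas (c+3) + s) := by
        rw [Finset.sum_Ico_eq_sum_range,
          show lucas (c+4) - lucas (c+3) = lucas (c+2) by omega]
      have hgreedy : ∀ s < lucas (c+2), beta (lucas (c+3) + s) = beta s + 1 := by
        intro s hs
        have hta : ltil (c+3) = lucas (c+3) := ltil_eq_lucas (by omega)
        have hta4 : ltil (c+3+1) = lucas (c+4) := ltil_eq_lucas (by omega)
        have hg := beta_greedy (x := lucas (c+3) + s) (g := c+3)
          (by rw [hta]; omega) (by rw [hta4]; omega)
        rw [hta] at hg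
        rw [hg]
        congr 2
        omega
      have hsum2 : ∑ s ∈ Finset.range (lucas (c+2)), beta (lucas (c+3) + s) =
          (∑ s ∈ Finset.range (lucas (c+2)), beta s) + lucas (c+2) := by
        rw [Finset.sum_congr rfl (fun s hs => hgreedy s (Finset.mem_range.mp hs)),
          Finset.sum_add_distrib, Finset.sum_const, Finset.card_range, smul_eq_mul, mul_one]
      have ih3 : ∑ r ∈ Finset.range (lucas (c+3)), beta r = (c+3) * Nat.fib (c+2) := by
        have h := ih (c+1) (by omega)
        rwa [show c+1+2 = c+3 from rfl, show c+1+1 = c+2 from rfl] at h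
      have ih2 : ∑ r ∈ Finset.range (lucas (c+2)), beta r = (c+2) * Nat.fib (c+1) :=
        ih c (by omega)
      have hlf : lucas (c+2) = Nat.fib (c+3) + Nat.fib (c+1) := by
        have h := lucas_fib (c+1)
        rwa [show c+1+1 = c+2 from rfl, show c+1+2 = c+3 from rfl] at h
      have hf3 : Nat.fib (c+3) = Nat.fib (c+1) + Nat.fib (c+2) := by
        have h := Nat.fib_add_two (n := c+1)
        rwa [show c+1+2 = c+3 from rfl, show c+1+1 = c+2 from rfl] at h
      rw [show c+2+2 = c+4 from rfl, show c+2+1 = c+3 from rfl]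
      rw [hsplit, hshift, hsum2, ih3, ih2, hlf, hf3]
      ring

theorem genus_S (a : ℕ) (ha : 2 ≤ a) :
    5 * {x : ℕ | x ∉ Sset a}.ncard = a * (lucas a + lucas (a - 2)) := by

  obtain ⟨b, rfl⟩ := Nat.exists_eq_add_of_le ha
  have e : 2 + b = b + 2 := by omega
  rw [e, show b + 2 - 2 = b by omega]
  have hb2 : 2 ≤ b + 2 := by omega
  rw [gap_set_eq hb2, Set.ncard_coe_finset, gapF_card hb2, sum_beta b,
    lucas_five_fib b]
  ring
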